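/- Let μ be a Borel probability measure on ℂ with compact support S satisfying Assumption (A). If K is either a nonempty compact subset of Ω⁻, or a nonempty compact subset of Ω⁺ with K ∩ S = ∅, then there exists a constant c(K) > 0 such that inf_{z∈K} ∫_S (log|z−w|)² dμ(w) ≥ c(K). -/

import Mathlib

open MeasureTheory ProbabilityTheory Filter Metric

/-- Logarithmic potential of a measure on ℂ. -/
noncomputable def logPot (μ : Measure ℂ) (z : ℂ) : ℝ :=
  ∫ w, Real.log ‖z - w‖ ∂μ

/-- Topological support of a measure on ℂ. -/
def msupport (μ : Measure ℂ) : Set ℂ :=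
  {x : ℂ | ∀ U ∈ nhds x, 0 < μ U}

/-- Assumption (A): for every compact `K`, `sup_{z ∈ K} ∫ (log|z-w|)² dμ(w) < ∞`. -/
def AssumptionA (μ : Measure ℂ) : Prop :=
  ∀ K : Set ℂ, IsCompact K → ∃ C : ℝ, ∀ z ∈ K,
    ∫⁻ w, ENNReal.ofReal ((Real.log ‖z - w‖) ^ 2) ∂μ ≤ ENNReal.ofReal C

/-- Assumption (D): `μ(B(z,r)) ≤ C rᵉ` for all `z` and `r > 0`. -/
def AssumptionD (μ : Measure ℂ) : Prop :=
  ∃ C : ℝ, ∃ ε : ℝ, 0 < ε ∧ ∀ z : ℂ, ∀ r : ℝ, 0 < r →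
    μ (Metric.ball z r) ≤ ENNReal.ofReal (C * r ^ ε)

/-- The filled unit lemniscate of `p_n(z) = ∏_{k<n} (z - X k ω)`. -/
def lemniscate {Ω : Type*} (X : ℕ → Ω → ℂ) (n : ℕ) (ω : Ω) : Set ℂ :=
  {z : ℂ | ‖∏ k ∈ Finset.range n, (z - X k ω)‖ < 1}

/-- Inradius of a planar set: the sup of radii of open disks contained in it (0 if none). -/
noncomputable def inradius (U : Set ℂ) : ℝ :=
  sSup {r : ℝ | 0 < r ∧ ∃ c : ℂ, Metric.ball c r ⊆ U}

private lemma meas_g (z : ℂ) :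
    Measurable (fun w => ENNReal.ofReal ((Real.log (‖z - w‖)) ^ 2)) := by
  apply ENNReal.measurable_ofReal.comp
  exact (Real.measurable_log.comp
    ((continuous_norm.comp (continuous_const.sub continuous_id)).measurable)).pow_const 2

theorem statement9
    (μ : Measure ℂ) [IsProbabilityMeasure μ] (hS : IsCompact (msupport μ))
    (hA : AssumptionA μ)
    (K : Set ℂ) (hK : IsCompact K) (hKne : K.Nonempty)
    (hcase : K ⊆ {z : ℂ | logPot μ z < 0} ∨
      (K ⊆ {z : ℂ | 0 < logPot μ z} ∧ K ∩ msupport μ = ∅)) :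
    ∃ c > (0 : ℝ), ∀ z ∈ K,
      ENNReal.ofReal c ≤
        ∫⁻ w, ENNReal.ofReal ((Real.log (‖z - w‖)) ^ 2) ∂μ := by
  by_contra hcon
  push_neg at hcon
  have hz0 : ∀ z ∈ K, logPot μ z ≠ 0 := by
    intro z hz
    rcases hcase with h | ⟨h, _⟩
    · exact ne_of_lt (h hz)
    · exact ne_of_gt (h hz)
  set g : ℂ → ℂ → ENNReal :=
    fun z w => ENNReal.ofReal ((Real.log (‖z - w‖)) ^ 2) with hgdef
  choose z' hz'K hz'lt using fun n : ℕ => hcon (1 / ((n : ℝ) + 1)) (by positivity)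
  obtain ⟨z, hzK, φ, hφ, hlim⟩ := hK.tendsto_subseq hz'K
  have key : ∫⁻ w, g z w ∂μ = 0 := by
    have h1 : ∫⁻ w, g z w ∂μ ≤ liminf (fun n => ∫⁻ w, g (z' (φ n)) w ∂μ) atTop := by
      refine le_trans ?_ (MeasureTheory.lintegral_liminf_le (fun n => meas_g _))
      apply lintegral_mono
      intro w
      by_cases hw : w = z
      · subst hw
        simp [hgdef]
      · have hcont : ContinuousAt (fun u : ℂ => g u w) z := by
          have habs : ‖z - w‖ ≠ 0 :=
            norm_ne_zero_iff.mpr (sub_ne_zero.mpr (Ne.symm hw))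
          have h1 : ContinuousAt (fun u : ℂ => ‖u - w‖) z :=
            (continuous_norm.comp (continuous_id.sub continuous_const)).continuousAt
          have h3 : ContinuousAt (fun u : ℂ => Real.log (‖u - w‖)) z :=
            h1.log habs
          exact ENNReal.continuous_ofReal.continuousAt.comp (h3.pow 2)
        have hc : Tendsto (fun n => g (z' (φ n)) w) atTop (nhds (g z w)) :=
          (hcont.tendsto).comp hlim
        show g z w ≤ liminf (fun n => g (z' (φ n)) w) atTop
        rw [hc.liminf_eq]
    have h2 : liminf (fun n => ∫⁻ w, g (z' (φ n)) w ∂μ) atTop = 0 := by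
      apply le_antisymm _ zero_le
      have hb : Tendsto (fun n : ℕ => ENNReal.ofReal (1 / ((n : ℝ) + 1))) atTop (nhds 0) := by
        rw [← ENNReal.ofReal_zero]
        exact ENNReal.tendsto_ofReal tendsto_one_div_add_atTop_nhds_zero_nat
      calc liminf (fun n => ∫⁻ w, g (z' (φ n)) w ∂μ) atTop
          ≤ liminf (fun n : ℕ => ENNReal.ofReal (1 / ((n : ℝ) + 1))) atTop := by
            refine liminf_le_liminf (Filter.Eventually.of_forall fun n => ?_)
            refine le_trans (hz'lt (φ n)).le (ENNReal.ofReal_le_ofReal ?_)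
            apply one_div_le_one_div_of_le (by positivity)
            have : (n : ℝ) ≤ (φ n : ℝ) := by exact_mod_cast hφ.le_apply
            linarith
        _ = 0 := hb.liminf_eq
    exact le_antisymm (h1.trans h2.le) zero_le
  have hae : ∀ᵐ w ∂μ, Real.log (‖z - w‖) = 0 := by
    have h0 := (lintegral_eq_zero_iff (meas_g z)).mp key
    filter_upwards [h0] with w hw
    have hw' : ENNReal.ofReal ((Real.log (‖z - w‖)) ^ 2) = 0 := hw
    rw [ENNReal.ofReal_eq_zero] at hw'
    have h2 := le_antisymm hw' (sq_nonneg _)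
    exact pow_eq_zero_iff (two_ne_zero) |>.mp h2
  have hzero : logPot μ z = 0 := by
    unfold logPot
    exact integral_eq_zero_of_ae hae
  exact hz0 z hzK hzero
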